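/- (Impossibility of a linear demand-private (2,2; M=1, R=1/2) scheme with subpacketization 2.) For any field F, there do not exist matrices C₀, C₁ ∈ F^{2×4}, each of rank 2, and transmissions T : {0,1}² → F⁴ such that both of the following hold: (correctness) for every demand pair (d₀,d₁) ∈ {0,1}² and every user i ∈ {0,1}, the cache C_i recovers file d_i from T(d₀,d₁) — that is, e₀, e₁ ∈ span(rows of C_i ∪ {T(d₀,d₁)}) if d_i = 0, and e₂, e₃ ∈ span(rows of C_i ∪ {T(d₀,d₁)}) if d_i = 1; and (necessary privacy condition) the last two coordinates of T(0,0) are not both zero. -/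

import Mathlib

/-- Coordinates of `F⁴` correspond to the subfiles `A₀, A₁, B₀, B₁`.  A user with
cache rows `c1, c2` recovers file `A` from transmission `t` iff `e₀` and `e₁`
lie in the span of `{c1, c2, t}`. -/
def recoversA {F : Type*} [Field F] (c1 c2 t : Fin 4 → F) : Prop :=
  (Pi.single 0 1 : Fin 4 → F) ∈ Submodule.span F {c1, c2, t} ∧
  (Pi.single 1 1 : Fin 4 → F) ∈ Submodule.span F {c1, c2, t}

/-- A user with cache rows `c1, c2` recovers file `B` from transmission `t` iff
`e₂` and `e₃` lie in the span of `{c1, c2, t}`. -/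
def recoversB {F : Type*} [Field F] (c1 c2 t : Fin 4 → F) : Prop :=
  (Pi.single 2 1 : Fin 4 → F) ∈ Submodule.span F {c1, c2, t} ∧
  (Pi.single 3 1 : Fin 4 → F) ∈ Submodule.span F {c1, c2, t}

section Helpers

open Submodule Module

variable {F : Type*} [Field F]

lemma mem_span_triple {x a b c : Fin 4 → F} :
    x ∈ Submodule.span F ({a, b, c} : Set (Fin 4 → F)) ↔
      ∃ α β γ : F, x = α • a + β • b + γ • c := by
  simp only [Submodule.mem_span_insert, Submodule.mem_span_singleton]
  constructor
  · rintro ⟨α, _, ⟨β, _, ⟨γ, rfl⟩, rfl⟩, rfl⟩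
    exact ⟨α, β, γ, by module⟩
  · rintro ⟨α, β, γ, rfl⟩
    exact ⟨α, _, ⟨β, _, ⟨γ, rfl⟩, rfl⟩, by module⟩

lemma span_triple_congr {a b c d : Fin 4 → F}
    (h : Submodule.span F ({a, b} : Set (Fin 4 → F)) = Submodule.span F {c, d}) (t : Fin 4 → F) :
    Submodule.span F ({a, b, t} : Set (Fin 4 → F)) = Submodule.span F {c, d, t} := by
  have h1 : ({a, b, t} : Set (Fin 4 → F)) = {a, b} ∪ {t} := by
    ext x; simp; tauto
  have h2 : ({c, d, t} : Set (Fin 4 → F)) = {c, d} ∪ {t} := by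
    ext x; simp; tauto
  rw [h1, h2, Submodule.span_union, Submodule.span_union, h]

/-- From recovery of file B, the cache contains a nonzero vector supported on
coordinates 2, 3. -/
lemma exists_B_vec {c1 c2 t : Fin 4 → F}
    (h2 : (Pi.single 2 1 : Fin 4 → F) ∈ Submodule.span F {c1, c2, t})
    (h3 : (Pi.single 3 1 : Fin 4 → F) ∈ Submodule.span F {c1, c2, t}) :
    ∃ b : Fin 4 → F, (b 2 ≠ 0 ∨ b 3 ≠ 0) ∧ b 0 = 0 ∧ b 1 = 0 ∧
      b ∈ Submodule.span F ({c1, c2} : Set (Fin 4 → F)) := by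
  obtain ⟨p1, p2, p3, hp⟩ := _root_.mem_span_triple.mp h2
  obtain ⟨q1, q2, q3, hq⟩ := _root_.mem_span_triple.mp h3
  by_cases hpq : p3 = 0 ∧ q3 = 0
  · refine ⟨Pi.single 2 1, Or.inl (by simp), by simp, by simp, ?_⟩
    rw [hp, hpq.1, zero_smul, add_zero]
    exact add_mem (smul_mem _ _ (subset_span (by simp))) (smul_mem _ _ (subset_span (by simp)))
  · refine ⟨q3 • (Pi.single 2 1 : Fin 4 → F) - p3 • (Pi.single 3 1 : Fin 4 → F), ?_, by simp, by simp, ?_⟩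
    · rcases not_and_or.mp hpq with h | h
      · exact Or.inr (by simpa using h)
      · exact Or.inl (by simpa using h)
    · have : q3 • (Pi.single 2 1 : Fin 4 → F) - p3 • (Pi.single 3 1 : Fin 4 → F)
          = (q3 * p1 - p3 * q1) • c1 + (q3 * p2 - p3 * q2) • c2 := by
        rw [hp, hq]; module
      rw [this]
      exact add_mem (smul_mem _ _ (subset_span (by simp))) (smul_mem _ _ (subset_span (by simp)))

/-- From recovery of file A, the cache contains a nonzero vector supported on
coordinates 0, 1. -/
lemma exists_A_vec {c1 c2 t : Fin 4 → F}
    (h0 : (Pi.single 0 1 : Fin 4 → F) ∈ Submodule.span F {c1, c2, t})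
    (h1 : (Pi.single 1 1 : Fin 4 → F) ∈ Submodule.span F {c1, c2, t}) :
    ∃ a : Fin 4 → F, (a 0 ≠ 0 ∨ a 1 ≠ 0) ∧ a 2 = 0 ∧ a 3 = 0 ∧
      a ∈ Submodule.span F ({c1, c2} : Set (Fin 4 → F)) := by
  obtain ⟨p1, p2, p3, hp⟩ := _root_.mem_span_triple.mp h0
  obtain ⟨q1, q2, q3, hq⟩ := _root_.mem_span_triple.mp h1
  by_cases hpq : p3 = 0 ∧ q3 = 0
  · refine ⟨Pi.single 0 1, Or.inl (by simp), by simp, by simp, ?_⟩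
    rw [hp, hpq.1, zero_smul, add_zero]
    exact add_mem (smul_mem _ _ (subset_span (by simp))) (smul_mem _ _ (subset_span (by simp)))
  · refine ⟨q3 • (Pi.single 0 1 : Fin 4 → F) - p3 • (Pi.single 1 1 : Fin 4 → F), ?_, by simp, by simp, ?_⟩
    · rcases not_and_or.mp hpq with h | h
      · exact Or.inr (by simpa using h)
      · exact Or.inl (by simpa using h)
    · have : q3 • (Pi.single 0 1 : Fin 4 → F) - p3 • (Pi.single 1 1 : Fin 4 → F)
          = (q3 * p1 - p3 * q1) • c1 + (q3 * p2 - p3 * q2) • c2 := by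
        rw [hp, hq]; module
      rw [this]
      exact add_mem (smul_mem _ _ (subset_span (by simp))) (smul_mem _ _ (subset_span (by simp)))

lemma indepAB {a b : Fin 4 → F} (ha2 : a 2 = 0) (ha3 : a 3 = 0) (ha : a 0 ≠ 0 ∨ a 1 ≠ 0)
    (hb0 : b 0 = 0) (hb1 : b 1 = 0) (hb : b 2 ≠ 0 ∨ b 3 ≠ 0) :
    LinearIndependent F ![a, b] := by
  rw [LinearIndependent.pair_iff]
  intro s t hst
  have h0 := congrFun hst 0
  have h1 := congrFun hst 1
  have h2 := congrFun hst 2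
  have h3 := congrFun hst 3
  simp [hb0, hb1, ha2, ha3] at h0 h1 h2 h3
  constructor
  · rcases ha with h | h
    · tauto
    · tauto
  · rcases hb with h | h
    · tauto
    · tauto

lemma span_rows_eq {C : Matrix (Fin 2) (Fin 4) F} (hr : C.rank = 2)
    {a b : Fin 4 → F} (ha : a ∈ Submodule.span F ({C 0, C 1} : Set (Fin 4 → F)))
    (hb : b ∈ Submodule.span F ({C 0, C 1} : Set (Fin 4 → F)))
    (hab : LinearIndependent F ![a, b]) :
    Submodule.span F ({C 0, C 1} : Set (Fin 4 → F)) = Submodule.span F {a, b} := by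
  have hrange : Set.range C = ({C 0, C 1} : Set (Fin 4 → F)) := by
    ext x; change (∃ i, C i = x) ↔ _; simp [Fin.exists_fin_two, eq_comm]
  have hrange2 : Set.range ![a, b] = ({a, b} : Set (Fin 4 → F)) := by
    ext x; simp [Fin.exists_fin_two, eq_comm]; tauto
  have h1 : finrank F (Submodule.span F ({C 0, C 1} : Set (Fin 4 → F))) = 2 := by
    have h := C.rank_eq_finrank_span_row
    rw [show Set.range C.row = Set.range C from rfl, hrange, hr] at h
    exact h.symm
  have h2 : finrank F (Submodule.span F ({a, b} : Set (Fin 4 → F))) = 2 := by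
    have := finrank_span_eq_card hab
    rw [hrange2] at this
    simpa using this
  have hle : Submodule.span F ({a, b} : Set (Fin 4 → F)) ≤
      Submodule.span F ({C 0, C 1} : Set (Fin 4 → F)) := by
    rw [Submodule.span_le]
    rintro x (rfl | rfl)
    · exact ha
    · exact hb
  exact (Submodule.eq_of_le_of_finrank_le hle (by rw [h1, h2])).symm

lemma coeffB {a b t : Fin 4 → F} (ha2 : a 2 = 0) (ha3 : a 3 = 0)
    (hb : b 2 ≠ 0 ∨ b 3 ≠ 0)
    (h0 : (Pi.single 0 1 : Fin 4 → F) ∈ Submodule.span F {a, b, t})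
    (h1 : (Pi.single 1 1 : Fin 4 → F) ∈ Submodule.span F {a, b, t}) :
    ∃ l : F, t 2 = l * b 2 ∧ t 3 = l * b 3 := by
  obtain ⟨p1, p2, p3, hp⟩ := _root_.mem_span_triple.mp h0
  obtain ⟨q1, q2, q3, hq⟩ := _root_.mem_span_triple.mp h1
  have hp0 := congrFun hp 0
  have hp1 := congrFun hp 1
  have hp2 := congrFun hp 2
  have hp3 := congrFun hp 3
  have hq0 := congrFun hq 0
  have hq1 := congrFun hq 1
  have hq2 := congrFun hq 2
  have hq3 := congrFun hq 3
  simp only [Pi.add_apply, Pi.smul_apply, smul_eq_mul, Pi.single_apply, ha2, ha3,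
    mul_zero, zero_add, add_zero, Fin.reduceEq, if_true, if_false, ite_true, ite_false,
    reduceIte, Fin.isValue] at hp0 hp1 hp2 hp3 hq0 hq1 hq2 hq3
  by_cases hc : p3 = 0
  · by_cases hd : q3 = 0
    · exfalso
      subst hc; subst hd
      simp only [zero_mul, add_zero] at hp0 hp1 hp2 hp3 hq0 hq1 hq2 hq3
      have hP2 : p2 = 0 := by
        rcases hb with h | h
        · exact (mul_eq_zero.mp hp2.symm).resolve_right h
        · exact (mul_eq_zero.mp hp3.symm).resolve_right h
      have hQ2 : q2 = 0 := by
        rcases hb with h | h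
        · exact (mul_eq_zero.mp hq2.symm).resolve_right h
        · exact (mul_eq_zero.mp hq3.symm).resolve_right h
      subst hP2; subst hQ2
      simp only [zero_mul, add_zero] at hp0 hp1 hq0 hq1
      exact one_ne_zero (by linear_combination (q1 * a 1) * hp0 - (p1 * a 1) * hq0 + hq1 : (1:F) = 0)
    · refine ⟨-(q2/q3), ?_, ?_⟩
      · field_simp
        linear_combination -hq2
      · field_simp
        linear_combination -hq3
  · refine ⟨-(p2/p3), ?_, ?_⟩
    · field_simp
      linear_combination -hp2
    · field_simp
      linear_combination -hp3

end Helpers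

/-- Impossibility of a linear demand-private `(2,2; M=1, R=1/2)` scheme with
subpacketization 2: there are no rank-2 cache matrices `C₀, C₁ ∈ F^{2×4}` and
transmissions `T (d₀,d₁) ∈ F⁴` such that every user `i` recovers its demanded
file `d_i` from its cache and `T (d₀,d₁)` (demand `0` = file `A`, `1` = file
`B`), while the transmission `T (0,0)` for demand `(A,A)` involves file `B`
nontrivially (the necessary condition for demand privacy). -/
theorem no_private_scheme_subpacketization_two (F : Type*) [Field F] :
    ¬ ∃ (C0 C1 : Matrix (Fin 2) (Fin 4) F) (T : Fin 2 × Fin 2 → Fin 4 → F),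
      C0.rank = 2 ∧ C1.rank = 2 ∧
      (∀ (d : Fin 2 × Fin 2) (i : Fin 2),
        if (if i = 0 then d.1 else d.2) = 0 then
          recoversA ((if i = 0 then C0 else C1) 0) ((if i = 0 then C0 else C1) 1) (T d)
        else
          recoversB ((if i = 0 then C0 else C1) 0) ((if i = 0 then C0 else C1) 1) (T d)) ∧
      ¬ (T (0, 0) 2 = 0 ∧ T (0, 0) 3 = 0) := by
  rintro ⟨C0, C1, T, hr0, hr1, hcor, hpriv⟩
  have h00a : recoversA (C0 0) (C0 1) (T (0, 0)) := by simpa using hcor (0, 0) 0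
  have h00a' : recoversA (C1 0) (C1 1) (T (0, 0)) := by simpa using hcor (0, 0) 1
  have h11b : recoversB (C0 0) (C0 1) (T (1, 1)) := by simpa using hcor (1, 1) 0
  have h11b' : recoversB (C1 0) (C1 1) (T (1, 1)) := by simpa using hcor (1, 1) 1
  have h01a : recoversA (C0 0) (C0 1) (T (0, 1)) := by simpa using hcor (0, 1) 0
  have h01b' : recoversB (C1 0) (C1 1) (T (0, 1)) := by simpa using hcor (0, 1) 1
  obtain ⟨a, ha01, ha2, ha3, haV⟩ := exists_A_vec h00a.1 h00a.2
  obtain ⟨b, hb23, hb0, hb1, hbV⟩ := exists_B_vec h11b.1 h11b.2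
  obtain ⟨a', ha01', ha2', ha3', haV'⟩ := exists_A_vec h00a'.1 h00a'.2
  obtain ⟨b', hb23', hb0', hb1', hbV'⟩ := exists_B_vec h11b'.1 h11b'.2
  have hV0 := span_rows_eq hr0 haV hbV (indepAB ha2 ha3 ha01 hb0 hb1 hb23)
  have hV1 := span_rows_eq hr1 haV' hbV' (indepAB ha2' ha3' ha01' hb0' hb1' hb23')
  have e00 := span_triple_congr hV0 (T (0, 0))
  have e00' := span_triple_congr hV1 (T (0, 0))
  have e01 := span_triple_congr hV0 (T (0, 1))
  have e01' := span_triple_congr hV1 (T (0, 1))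
  obtain ⟨l, hl2, hl3⟩ := coeffB ha2 ha3 hb23 (e00 ▸ h00a.1) (e00 ▸ h00a.2)
  obtain ⟨l', hl2', hl3'⟩ := coeffB ha2' ha3' hb23' (e00' ▸ h00a'.1) (e00' ▸ h00a'.2)
  obtain ⟨n, hn2, hn3⟩ := coeffB ha2 ha3 hb23 (e01 ▸ h01a.1) (e01 ▸ h01a.2)
  have hl : l ≠ 0 := by
    rintro rfl
    exact hpriv ⟨by rw [hl2, zero_mul], by rw [hl3, zero_mul]⟩
  have m2 : l * b 2 = l' * b' 2 := by rw [← hl2, ← hl2']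
  have m3 : l * b 3 = l' * b' 3 := by rw [← hl3, ← hl3']
  obtain ⟨α, β, γ, he2⟩ := mem_span_triple.mp (e01' ▸ h01b'.1)
  obtain ⟨α2, β2, γ2, he3⟩ := mem_span_triple.mp (e01' ▸ h01b'.2)
  have E1 := congrFun he2 2
  have E2 := congrFun he2 3
  have E3 := congrFun he3 2
  have E4 := congrFun he3 3
  simp only [Pi.add_apply, Pi.smul_apply, smul_eq_mul, Pi.single_apply, ha2', ha3',
    mul_zero, zero_add, add_zero, Fin.reduceEq, if_true, if_false, ite_true, ite_false,
    reduceIte, Fin.isValue] at E1 E2 E3 E4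
  -- E1 : 1 = β * b' 2 + γ * T (0,1) 2, E2 : 0 = β * b' 3 + γ * T (0,1) 3
  -- E3 : 0 = β2 * b' 2 + γ2 * T (0,1) 2, E4 : 1 = β2 * b' 3 + γ2 * T (0,1) 3
  have hu2 : (l * β + γ * n * l') * b' 2 = l := by
    linear_combination -l * E1 - l * γ * hn2 - γ * n * m2
  have hv2 : (l * β2 + γ2 * n * l') * b' 2 = 0 := by
    linear_combination -l * E3 - l * γ2 * hn2 - γ2 * n * m2
  have hv3 : (l * β2 + γ2 * n * l') * b' 3 = l := by
    linear_combination -l * E4 - l * γ2 * hn3 - γ2 * n * m3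
  have hvl : (l * β2 + γ2 * n * l') * l = 0 := by
    linear_combination (l * β + γ * n * l') * hv2 - (l * β2 + γ2 * n * l') * hu2
  have hll : l * l = 0 := by
    linear_combination b' 3 * hvl - l * hv3
  exact hl (mul_self_eq_zero.mp hll)
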